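/- (Proposition 5.) Let T be a finite set of time series, x ∈ T, let U be a regularized band with U ≠ T, and let V be the adjacent regularized band, i.e. the smallest regularized band strictly containing U. Define g(X) = (Score₁(X) − Score₁(U)) / (|X| − |U|) for X ⊋ U. Then g(V) = min { g(X) : U ⊊ X ⊆ T }. -/

import Mathlib

open Finset
open scoped Classical

/-- The envelope-area score of a finite set `U` of time series over a finite domain `D`:
`Score₁(U) = ∑_{i ∈ D} (max_{t ∈ U} t(i) − min_{t ∈ U} t(i))`. -/
noncomputable def score1 {D : Type*} [Fintype D] (U : Finset (D → ℝ)) : ℝ :=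
  ∑ i : D, (sSup ((fun f => f i) '' (U : Set (D → ℝ))) -
            sInf ((fun f => f i) '' (U : Set (D → ℝ))))

/-- The regularized score `Reg(U;α) = Score₁(U) − α|U|`. -/
noncomputable def reg {D : Type*} [Fintype D] (α : ℝ) (U : Finset (D → ℝ)) : ℝ :=
  score1 U - α * U.card

/-- `U` is the regularized band of `T` (with seed `x ∈ U`) for the parameter `α`:
it minimizes `Reg(·;α) = Score₁(·) − α|·|` over all subsets of `T` containing `x`,
and has maximum cardinality among such minimizers (ties broken towards larger sets). -/
def IsRegBand {D : Type*} [Fintype D] (T : Finset (D → ℝ)) (x : D → ℝ) (α : ℝ)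
    (U : Finset (D → ℝ)) : Prop :=
  U ⊆ T ∧ x ∈ U ∧
  (∀ V ⊆ T, x ∈ V → reg α U ≤ reg α V) ∧
  (∀ V ⊆ T, x ∈ V → reg α V = reg α U → V.card ≤ U.card)

lemma score1_submodular {D : Type*} [Fintype D] (A B : Finset (D → ℝ))
    (h : (A ∩ B).Nonempty) :
    score1 (A ∪ B) + score1 (A ∩ B) ≤ score1 A + score1 B := by
  unfold score1
  rw [← Finset.sum_add_distrib, ← Finset.sum_add_distrib]
  refine Finset.sum_le_sum fun i _ => ?_
  set f : (D → ℝ) → ℝ := fun g => g i with hf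
  obtain ⟨y, hy⟩ := h
  have hyA : y ∈ A := (Finset.mem_inter.mp hy).1
  have hyB : y ∈ B := (Finset.mem_inter.mp hy).2
  have hAne : (f '' (A : Set (D → ℝ))).Nonempty := ⟨f y, ⟨y, by simpa using hyA, rfl⟩⟩
  have hBne : (f '' (B : Set (D → ℝ))).Nonempty := ⟨f y, ⟨y, by simpa using hyB, rfl⟩⟩
  have hIne : (f '' ((A ∩ B : Finset _) : Set (D → ℝ))).Nonempty :=
    ⟨f y, ⟨y, by simpa using hy, rfl⟩⟩
  have hAbd : BddAbove (f '' (A : Set (D → ℝ))) := (A.finite_toSet.image f).bddAbove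
  have hBbd : BddAbove (f '' (B : Set (D → ℝ))) := (B.finite_toSet.image f).bddAbove
  have hAbd' : BddBelow (f '' (A : Set (D → ℝ))) := (A.finite_toSet.image f).bddBelow
  have hBbd' : BddBelow (f '' (B : Set (D → ℝ))) := (B.finite_toSet.image f).bddBelow
  have hUnion : (↑(A ∪ B) : Set (D → ℝ)) = ↑A ∪ ↑B := Finset.coe_union A B
  have hInter : (↑(A ∩ B) : Set (D → ℝ)) = ↑A ∩ ↑B := Finset.coe_inter A B
  have hsupU : sSup (f '' (↑(A ∪ B) : Set (D → ℝ))) =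
      sSup (f '' (A : Set (D → ℝ))) ⊔ sSup (f '' (B : Set (D → ℝ))) := by
    rw [hUnion, Set.image_union]
    exact csSup_union hAbd hAne hBbd hBne
  have hinfU : sInf (f '' (↑(A ∪ B) : Set (D → ℝ))) =
      sInf (f '' (A : Set (D → ℝ))) ⊓ sInf (f '' (B : Set (D → ℝ))) := by
    rw [hUnion, Set.image_union]
    exact csInf_union hAbd' hAne hBbd' hBne
  have hsubA : f '' (↑(A ∩ B) : Set (D → ℝ)) ⊆ f '' (A : Set (D → ℝ)) := by
    rw [hInter]; exact Set.image_mono Set.inter_subset_left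
  have hsubB : f '' (↑(A ∩ B) : Set (D → ℝ)) ⊆ f '' (B : Set (D → ℝ)) := by
    rw [hInter]; exact Set.image_mono Set.inter_subset_right
  have hsI1 : sSup (f '' (↑(A ∩ B) : Set (D → ℝ))) ≤ sSup (f '' (A : Set (D → ℝ))) :=
    csSup_le_csSup hAbd hIne hsubA
  have hsI2 : sSup (f '' (↑(A ∩ B) : Set (D → ℝ))) ≤ sSup (f '' (B : Set (D → ℝ))) :=
    csSup_le_csSup hBbd hIne hsubB
  have hiI1 : sInf (f '' (A : Set (D → ℝ))) ≤ sInf (f '' (↑(A ∩ B) : Set (D → ℝ))) :=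
    csInf_le_csInf hAbd' hIne hsubA
  have hiI2 : sInf (f '' (B : Set (D → ℝ))) ≤ sInf (f '' (↑(A ∩ B) : Set (D → ℝ))) :=
    csInf_le_csInf hBbd' hIne hsubB
  rw [hsupU, hinfU]
  rw [hInter] at hsI1 hsI2 hiI1 hiI2
  rcases le_total (sSup (f '' (A : Set (D → ℝ)))) (sSup (f '' (B : Set (D → ℝ)))) with h1 | h1 <;>
  rcases le_total (sInf (f '' (A : Set (D → ℝ)))) (sInf (f '' (B : Set (D → ℝ)))) with h2 | h2 <;>
  simp [sup_eq_left.mpr, sup_eq_right.mpr, inf_eq_left.mpr, inf_eq_right.mpr, max_eq_left, max_eq_right, min_eq_left, min_eq_right, h1, h2] <;>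
  linarith

/-- Proposition 5: let `U` be a regularized band of `T` (seed `x ∈ T`) with `U ≠ T`, and let
`V` be the adjacent regularized band, i.e. the smallest regularized band strictly
containing `U`. With `g X = (Score₁(X) − Score₁(U)) / (|X| − |U|)` for `X ⊋ U`, the value
`g V` is the minimum of `g X` over all `X` with `U ⊊ X ⊆ T`. -/
theorem regband_sparsest {D : Type*} [Fintype D] [Nonempty D]
    (T : Finset (D → ℝ)) (x : D → ℝ) (hx : x ∈ T)
    (U V : Finset (D → ℝ))
    (hU : ∃ α : ℝ, 0 < α ∧ IsRegBand T x α U) (hUT : U ≠ T)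
    (hV : ∃ α : ℝ, 0 < α ∧ IsRegBand T x α V) (hUV : U ⊂ V)
    (hVadj : ∀ W : Finset (D → ℝ), (∃ α : ℝ, 0 < α ∧ IsRegBand T x α W) → U ⊂ W → V ⊆ W) :
    IsLeast
      {r : ℝ | ∃ X : Finset (D → ℝ), U ⊂ X ∧ X ⊆ T ∧
        r = (score1 X - score1 U) / ((X.card : ℝ) - (U.card : ℝ))}
      ((score1 V - score1 U) / ((V.card : ℝ) - (U.card : ℝ))) := by
  classical
  obtain ⟨α₀, hα₀, hUsub, hxU, hUmin, hUmax⟩ := hU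
  obtain ⟨α₁, hα₁, hVsub, hxV, hVmin, hVmax⟩ := hV
  have hdpos : ∀ X : Finset (D → ℝ), U ⊂ X → (0:ℝ) < (X.card:ℝ) - U.card := by
    intro X h1
    have h := Finset.card_lt_card h1
    have : (U.card:ℝ) < X.card := by exact_mod_cast h
    linarith
  set Cand : Finset (Finset (D → ℝ)) := T.powerset.filter (fun X => U ⊂ X) with hCanddef
  have memCand : ∀ X : Finset (D → ℝ), X ∈ Cand ↔ X ⊆ T ∧ U ⊂ X := by
    intro X; simp [hCanddef, Finset.mem_powerset]
  have hVC : V ∈ Cand := (memCand V).2 ⟨hVsub, hUV⟩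
  have hne : ((Cand.image fun X => (score1 X - score1 U) / ((X.card:ℝ) - U.card))).Nonempty :=
    ⟨_, Finset.mem_image_of_mem _ hVC⟩
  set m : ℝ := ((Cand.image fun X => (score1 X - score1 U) / ((X.card:ℝ) - U.card))).min' hne
    with hmdef
  have hm_le : ∀ X : Finset (D → ℝ), U ⊂ X → X ⊆ T →
      m ≤ (score1 X - score1 U) / ((X.card:ℝ) - U.card) := fun X h1 h2 =>
    Finset.min'_le _ _ (Finset.mem_image_of_mem _ ((memCand X).2 ⟨h2, h1⟩))
  have hm_lin : ∀ X : Finset (D → ℝ), U ⊂ X → X ⊆ T →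
      m * ((X.card:ℝ) - U.card) ≤ score1 X - score1 U := by
    intro X h1 h2
    have h := hm_le X h1 h2
    rw [le_div_iff₀ (hdpos X h1)] at h
    linarith
  obtain ⟨Xs, hXsC, hXseq⟩ : ∃ Xs ∈ Cand,
      (score1 Xs - score1 U)/((Xs.card:ℝ) - U.card) = m := by
    obtain ⟨X, hX, hXe⟩ := Finset.mem_image.mp (Finset.min'_mem _ hne)
    exact ⟨X, hX, hXe⟩
  obtain ⟨hXsT, hUXs⟩ := (memCand Xs).1 hXsC
  have hXslin : score1 Xs - score1 U = m * ((Xs.card:ℝ) - U.card) :=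
    (div_eq_iff (ne_of_gt (hdpos Xs hUXs))).mp hXseq
  have hα₀m : α₀ ≤ m := by
    rw [← hXseq, le_div_iff₀ (hdpos Xs hUXs)]
    have h := hUmin Xs hXsT (hUXs.subset hxU)
    simp only [reg] at h
    linarith
  have hmpos : 0 < m := lt_of_lt_of_le hα₀ hα₀m
  -- small-cardinality comparison at parameter m
  have hsmall : ∀ Z : Finset (D → ℝ), Z ⊆ T → x ∈ Z → Z.card ≤ U.card →
      score1 U - m * U.card ≤ score1 Z - m * Z.card := by
    intro Z hZT hxZ hcard
    have h0 := hUmin Z hZT hxZ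
    simp only [reg] at h0
    have hc : (Z.card:ℝ) ≤ U.card := by exact_mod_cast hcard
    nlinarith [mul_nonneg (sub_nonneg.mpr hα₀m) (sub_nonneg.mpr hc)]
  -- U minimizes reg m
  have hB : ∀ Y : Finset (D → ℝ), Y ⊆ T → x ∈ Y →
      score1 U - m * U.card ≤ score1 Y - m * Y.card := by
    intro Y hYT hxY
    have hxQ : x ∈ Y ∩ U := Finset.mem_inter.mpr ⟨hxY, hxU⟩
    have hsub := score1_submodular Y U ⟨x, hxQ⟩
    have hcardeq : ((Y ∪ U).card : ℝ) + ((Y ∩ U).card : ℝ) = (Y.card:ℝ) + U.card := by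
      exact_mod_cast Finset.card_union_add_card_inter Y U
    have hQ : score1 U - m * U.card ≤ score1 (Y ∩ U) - m * ((Y ∩ U).card) :=
      hsmall _ ((Finset.inter_subset_right).trans hUsub) hxQ
        (Finset.card_le_card Finset.inter_subset_right)
    have hP : score1 U - m * U.card ≤ score1 (Y ∪ U) - m * ((Y ∪ U).card) := by
      by_cases hYU : Y ⊆ U
      · rw [Finset.union_eq_right.mpr hYU]
      · have hUP : U ⊂ Y ∪ U := by
          refine (Finset.ssubset_iff_of_subset Finset.subset_union_right).mpr ?_
          obtain ⟨y, hy1, hy2⟩ := Finset.not_subset.mp hYU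
          exact ⟨y, Finset.mem_union_left _ hy1, hy2⟩
        have h := hm_lin _ hUP (Finset.union_subset hYT hUsub)
        linarith
    have hmul : m * ((Y ∪ U).card:ℝ) + m * ((Y ∩ U).card:ℝ) = m * Y.card + m * U.card := by
      rw [← mul_add, ← mul_add, hcardeq]
    linarith
  have hregU : ∀ Y : Finset (D → ℝ), Y ⊆ T → x ∈ Y → reg m U ≤ reg m Y := by
    intro Y h1 h2; simpa [reg] using hB Y h1 h2
  -- the family of minimizers of reg m
  set A : Finset (Finset (D → ℝ)) :=
    T.powerset.filter (fun Y => x ∈ Y ∧ reg m Y = reg m U) with hAdef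
  have memA : ∀ Y : Finset (D → ℝ), Y ∈ A ↔ Y ⊆ T ∧ x ∈ Y ∧ reg m Y = reg m U := by
    intro Y; simp [hAdef, Finset.mem_powerset, and_assoc]
  have hUA : U ∈ A := (memA U).2 ⟨hUsub, hxU, rfl⟩
  have hXsA : Xs ∈ A := by
    refine (memA Xs).2 ⟨hXsT, hUXs.subset hxU, ?_⟩
    simp only [reg]
    linarith
  obtain ⟨W, hWA, hWmax⟩ := Finset.exists_max_image A Finset.card ⟨U, hUA⟩
  obtain ⟨hWT, hxW, hWreg⟩ := (memA W).1 hWA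
  have hcards : U.card < W.card := lt_of_lt_of_le (Finset.card_lt_card hUXs) (hWmax Xs hXsA)
  have hUW : U ⊂ W := by
    have hxQ : x ∈ U ∩ W := Finset.mem_inter.mpr ⟨hxU, hxW⟩
    have hsub := score1_submodular U W ⟨x, hxQ⟩
    have hcardeq : ((U ∪ W).card : ℝ) + ((U ∩ W).card : ℝ) = (U.card:ℝ) + W.card := by
      exact_mod_cast Finset.card_union_add_card_inter U W
    have h1 := hB (U ∪ W) (Finset.union_subset hUsub hWT) (Finset.mem_union_left _ hxU)
    have h2 := hB (U ∩ W) ((Finset.inter_subset_left).trans hUsub) hxQ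
    have hWreg' : score1 W - m * W.card = score1 U - m * U.card := by
      have := hWreg; simp only [reg] at this; linarith
    have hmul : m * ((U ∪ W).card:ℝ) + m * ((U ∩ W).card:ℝ) = m * U.card + m * W.card := by
      rw [← mul_add, ← mul_add, hcardeq]
    have hPreg : reg m (U ∪ W) = reg m U := by simp only [reg]; linarith
    have hUnA : (U ∪ W) ∈ A :=
      (memA _).2 ⟨Finset.union_subset hUsub hWT, Finset.mem_union_left _ hxU, hPreg⟩
    have hle := hWmax _ hUnA
    have hWeq : W = U ∪ W := Finset.eq_of_subset_of_card_le Finset.subset_union_right hle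
    have hsubUW : U ⊆ W := by rw [hWeq]; exact Finset.subset_union_left
    exact hsubUW.ssubset_of_ne (fun h => by rw [h] at hcards; exact lt_irrefl _ hcards)
  have hWband : IsRegBand T x m W := by
    refine ⟨hWT, hxW, ?_, ?_⟩
    · intro Y h1 h2; rw [hWreg]; exact hregU Y h1 h2
    · intro Y h1 h2 h3
      exact hWmax Y ((memA Y).2 ⟨h1, h2, by rw [h3, hWreg]⟩)
  have hVW : V ⊆ W := hVadj W ⟨m, hmpos, hWband⟩ hUW
  have hWlin : score1 W - score1 U = m * ((W.card:ℝ) - U.card) := by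
    have := hWreg; simp only [reg] at this
    have hexp : m * ((W.card:ℝ) - U.card) = m * W.card - m * U.card := by ring
    rw [hexp]; linarith
  have hdV := hdpos V hUV
  have hVle : (score1 V - score1 U) / ((V.card:ℝ) - U.card) ≤ m := by
    rw [div_le_iff₀ hdV]
    have h1 := hVmin U hUsub hxU
    have h2 := hVmin W hWT hxW
    simp only [reg] at h1 h2
    have hc : (V.card:ℝ) ≤ W.card := by exact_mod_cast Finset.card_le_card hVW
    rcases le_total α₁ m with h | h
    · nlinarith [mul_nonneg (sub_nonneg.mpr h) (le_of_lt hdV)]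
    · nlinarith [mul_nonneg (sub_nonneg.mpr h) (sub_nonneg.mpr hc)]
  constructor
  · exact ⟨V, hUV, hVsub, rfl⟩
  · rintro r ⟨X, hX1, hX2, rfl⟩
    exact le_trans hVle (hm_le X hX1 hX2)
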